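/- arXiv:2211.09362 — 2 statements merged into one kernel-verified Lean document; each statement's English description precedes it below -/
import Mathlib

section
/- Under the assumptions of the even-shift equivariance identity, the low-resolution approximation error of the ORKA objective is bounded by the highpass energy: |⟨A^{−1,[K]}, (S_{−2λ'}(D))ᵀ S_{−2λ'}(D)⟩ − ⟨A^{−1,[K]}, (S_{−λ'}(D^{low}))ᵀ S_{−λ'}(D^{low})⟩| ≤ ‖A^{−1,[K]}‖_F · ‖D^{high}‖_F². -/
open Matrix

/-- Cyclic shift of a vector by `m` entries: `(S_m v)_j = v_{j-m}`. -/
def shiftVec {M : ℕ} (m : ℤ) (v : ZMod M → ℝ) : ZMod M → ℝ :=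
  fun j => v (j - (m : ZMod M))

/-- Column-wise cyclic shift operator: shifts the `k`-th column by `lam k` entries. -/
def colShift {M N : ℕ} (lam : Fin N → ℤ) (A : Matrix (ZMod M) (Fin N) ℝ) :
    Matrix (ZMod M) (Fin N) ℝ :=
  fun j k => A (j - (lam k : ZMod M)) k

/-- Column-wise lowpass coefficients of `D` under the wavelet transform `W`. -/
def lowpass {M N : ℕ} [NeZero M] (W : Matrix (ZMod M ⊕ ZMod M) (ZMod (2 * M)) ℝ)
    (D : Matrix (ZMod (2 * M)) (Fin N) ℝ) : Matrix (ZMod M) (Fin N) ℝ :=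
  fun j k => W.mulVec (fun i => D i k) (Sum.inl j)

/-- Column-wise highpass coefficients of `D` under the wavelet transform `W`. -/
def highpass {M N : ℕ} [NeZero M] (W : Matrix (ZMod M ⊕ ZMod M) (ZMod (2 * M)) ℝ)
    (D : Matrix (ZMod (2 * M)) (Fin N) ℝ) : Matrix (ZMod M) (Fin N) ℝ :=
  fun j k => W.mulVec (fun i => D i k) (Sum.inr j)

section Aux

variable {M N : ℕ} [NeZero M]

/-- Orthogonality of `W` as preservation of dot products. -/
lemma ortho_dot (W : Matrix (ZMod M ⊕ ZMod M) (ZMod (2 * M)) ℝ)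
    (hW : Wᵀ * W = 1) (u v : ZMod (2 * M) → ℝ) :
    ∑ s, W.mulVec u s * W.mulVec v s = ∑ i, u i * v i := by
  have h : (W.mulVec u) ⬝ᵥ (W.mulVec v) = u ⬝ᵥ v := by
    rw [Matrix.dotProduct_mulVec, ← Matrix.mulVec_transpose, Matrix.mulVec_mulVec, hW,
      Matrix.one_mulVec]
  simpa [dotProduct] using h

lemma shift_sum_sq (c : ℤ) (f : ZMod M → ℝ) :
    ∑ j : ZMod M, (f (j - (c : ZMod M))) ^ 2 = ∑ j : ZMod M, (f j) ^ 2 :=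
  Fintype.sum_equiv (Equiv.subRight (c : ZMod M)) _ _ (fun _ => rfl)

end Aux



set_option maxRecDepth 8000 in
/-- The low-resolution approximation error of the ORKA objective is bounded by
the highpass energy: `|⟨B, Gram(S_{−2λ'}D)⟩ − ⟨B, Gram(S_{−λ'}D^low)⟩| ≤ ‖B‖_F ‖D^high‖_F²`. -/
theorem lowres_error_bound {M N : ℕ} [NeZero M]
    (W : Matrix (ZMod M ⊕ ZMod M) (ZMod (2 * M)) ℝ)
    (hW : Wᵀ * W = 1)
    (hshift : ∀ (v : ZMod (2 * M) → ℝ) (lam : ℤ),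
      W.mulVec (shiftVec (2 * lam) v) =
        Sum.elim (shiftVec lam (fun j => W.mulVec v (Sum.inl j)))
                 (shiftVec lam (fun j => W.mulVec v (Sum.inr j))))
    (D : Matrix (ZMod (2 * M)) (Fin N) ℝ) (lam' : Fin N → ℤ)
    (B : Matrix (Fin N) (Fin N) ℝ) :
    |(∑ j, ∑ k, B j k *
        (((colShift (fun k => -(2 * lam' k)) D)ᵀ *
          colShift (fun k => -(2 * lam' k)) D) j k)) -
      (∑ j, ∑ k, B j k *
        (((colShift (fun k => -lam' k) (lowpass W D))ᵀ *
          colShift (fun k => -lam' k) (lowpass W D)) j k))| ≤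
      Real.sqrt (∑ j, ∑ k, (B j k) ^ 2) *
        (∑ j, ∑ k, (highpass W D j k) ^ 2) := by
  set H : Matrix (ZMod M) (Fin N) ℝ := colShift (fun k => -lam' k) (highpass W D) with hH
  set L : Matrix (ZMod M) (Fin N) ℝ := colShift (fun k => -lam' k) (lowpass W D) with hL
  set G : Matrix (ZMod (2 * M)) (Fin N) ℝ := colShift (fun k => -(2 * lam' k)) D with hG
  -- Gram decomposition
  have key : ∀ j k, (Gᵀ * G) j k = (Lᵀ * L) j k + (Hᵀ * H) j k := by
    intro j k
    have hcol : ∀ k : Fin N, (fun i => G i k) =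
        shiftVec (2 * (-lam' k)) (fun i => D i k) := by
      intro k
      funext i
      simp only [hG, colShift, shiftVec]
      norm_num
    have hWG : ∀ k : Fin N, W.mulVec (fun i => G i k) =
        Sum.elim (shiftVec (-lam' k) (fun j => W.mulVec (fun i => D i k) (Sum.inl j)))
                 (shiftVec (-lam' k) (fun j => W.mulVec (fun i => D i k) (Sum.inr j))) := by
      intro k; rw [hcol k]; exact hshift _ _
    have := ortho_dot W hW (fun i => G i j) (fun i => G i k)
    simp only [Matrix.mul_apply, Matrix.transpose_apply]
    rw [← this]
    rw [Fintype.sum_sum_type]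
    congr 1
    · refine Finset.sum_congr rfl fun s _ => ?_
      rw [hWG j, hWG k]
      simp [hL, colShift, lowpass, shiftVec]
    · refine Finset.sum_congr rfl fun s _ => ?_
      rw [hWG j, hWG k]
      simp [hH, colShift, highpass, shiftVec]
  have hdiff : (∑ j, ∑ k, B j k * (Gᵀ * G) j k) - (∑ j, ∑ k, B j k * (Lᵀ * L) j k)
      = ∑ j, ∑ k, B j k * (Hᵀ * H) j k := by
    rw [← Finset.sum_sub_distrib]
    refine Finset.sum_congr rfl fun j _ => ?_
    rw [← Finset.sum_sub_distrib]
    refine Finset.sum_congr rfl fun k _ => ?_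
    rw [key j k]; ring
  rw [hdiff]
  -- Cauchy-Schwarz over pairs (j,k)
  have cs : |∑ j, ∑ k, B j k * (Hᵀ * H) j k| ≤
      Real.sqrt (∑ j, ∑ k, (B j k) ^ 2) *
      Real.sqrt (∑ j, ∑ k, ((Hᵀ * H) j k) ^ 2) := by
    have h1 : |∑ j, ∑ k, B j k * (Hᵀ * H) j k| =
        |∑ p : Fin N × Fin N, B p.1 p.2 * (Hᵀ * H) p.1 p.2| := by
      rw [← Finset.sum_product']
      rfl
    rw [h1]
    have h2 := Finset.sum_mul_sq_le_sq_mul_sq Finset.univ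
        (fun p : Fin N × Fin N => B p.1 p.2) (fun p : Fin N × Fin N => (Hᵀ * H) p.1 p.2)
    have e1 : (∑ p : Fin N × Fin N, (B p.1 p.2) ^ 2) = ∑ j, ∑ k, (B j k) ^ 2 := by
      rw [← Finset.sum_product']; rfl
    have e2 : (∑ p : Fin N × Fin N, ((Hᵀ * H) p.1 p.2) ^ 2) =
        ∑ j, ∑ k, ((Hᵀ * H) j k) ^ 2 := by
      rw [← Finset.sum_product']; rfl
    calc |∑ p : Fin N × Fin N, B p.1 p.2 * (Hᵀ * H) p.1 p.2|
        = Real.sqrt ((∑ p : Fin N × Fin N, B p.1 p.2 * (Hᵀ * H) p.1 p.2) ^ 2) :=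
          (Real.sqrt_sq_eq_abs _).symm
      _ ≤ Real.sqrt ((∑ p : Fin N × Fin N, (B p.1 p.2) ^ 2) *
            (∑ p : Fin N × Fin N, ((Hᵀ * H) p.1 p.2) ^ 2)) := Real.sqrt_le_sqrt h2
      _ = Real.sqrt (∑ j, ∑ k, (B j k) ^ 2) *
            Real.sqrt (∑ j, ∑ k, ((Hᵀ * H) j k) ^ 2) := by
          rw [e1, e2, Real.sqrt_mul (by positivity)]
  refine cs.trans ?_
  have hBnn : (0:ℝ) ≤ Real.sqrt (∑ j, ∑ k, (B j k) ^ 2) := Real.sqrt_nonneg _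
  gcongr
  -- ‖HᵀH‖_F ≤ ‖H‖_F² and shift invariance
  have hHnorm : ∑ i : ZMod M, ∑ k, (H i k) ^ 2 = ∑ j, ∑ k, (highpass W D j k) ^ 2 := by
    have hc : ∀ k : Fin N, ∑ i : ZMod M, (H i k) ^ 2 =
        ∑ i : ZMod M, (highpass W D i k) ^ 2 := fun k => by
      simpa [hH, colShift] using shift_sum_sq (M := M) (-lam' k) (fun i => highpass W D i k)
    calc ∑ i : ZMod M, ∑ k, (H i k) ^ 2 = ∑ k, ∑ i : ZMod M, (H i k) ^ 2 := Finset.sum_comm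
      _ = ∑ k, ∑ i : ZMod M, (highpass W D i k) ^ 2 := Finset.sum_congr rfl fun k _ => hc k
      _ = _ := Finset.sum_comm
  have hgram : ∑ j, ∑ k, ((Hᵀ * H) j k) ^ 2 ≤
      (∑ i : ZMod M, ∑ k, (H i k) ^ 2) ^ 2 := by
    have step : ∀ j k : Fin N, ((Hᵀ * H) j k) ^ 2 ≤
        (∑ i : ZMod M, (H i j) ^ 2) * (∑ i : ZMod M, (H i k) ^ 2) := by
      intro j k
      simpa [Matrix.mul_apply, Matrix.transpose_apply] using
        Finset.sum_mul_sq_le_sq_mul_sq Finset.univ (fun i => H i j) (fun i => H i k)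
    calc ∑ j, ∑ k, ((Hᵀ * H) j k) ^ 2
        ≤ ∑ j, ∑ k, (∑ i : ZMod M, (H i j) ^ 2) * (∑ i : ZMod M, (H i k) ^ 2) := by
          refine Finset.sum_le_sum fun j _ => Finset.sum_le_sum fun k _ => step j k
      _ = (∑ j, ∑ i : ZMod M, (H i j) ^ 2) * (∑ k, ∑ i : ZMod M, (H i k) ^ 2) := by
          rw [Finset.sum_mul_sum]
      _ = (∑ i : ZMod M, ∑ k, (H i k) ^ 2) ^ 2 := by
          rw [sq, Finset.sum_comm]
  calc Real.sqrt (∑ j, ∑ k, ((Hᵀ * H) j k) ^ 2)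
      ≤ Real.sqrt ((∑ i : ZMod M, ∑ k, (H i k) ^ 2) ^ 2) := Real.sqrt_le_sqrt hgram
    _ = ∑ i : ZMod M, ∑ k, (H i k) ^ 2 := by
        rw [Real.sqrt_sq (by positivity)]
    _ = _ := hHnorm
end

section
/- Let D ∈ ℝ^{M×N}, λ ∈ ℤ^N, λ' ∈ ℤ^N with λ = 2λ' + λ'' for some λ'' ∈ {−1,0,1}^N, and let B ∈ ℝ^{N×N}. Then |⟨B, (S_{−λ}(D))ᵀ S_{−λ}(D) − (S_{−2λ'}(D))ᵀ S_{−2λ'}(D)⟩| ≤ Σ_{j,k=1}^N |B_{jk}| ‖D_{:,j}‖₂ ‖D_{:,k} − S_{λ''_k − λ''_j}(D_{:,k})‖₂, where S_m applied to a vector denotes cyclic shift by m entries. -/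
open Matrix

/-- Euclidean norm of a vector indexed by `ZMod M`. -/
noncomputable def vecNorm {M : ℕ} [NeZero M] (v : ZMod M → ℝ) : ℝ :=
  Real.sqrt (∑ j, (v j) ^ 2)

lemma sum_reindex_sub {M : ℕ} [NeZero M] (f : ZMod M → ℝ) (c : ZMod M) :
    ∑ i, f (i - c) = ∑ i, f i :=
  Equiv.sum_comp (Equiv.subRight c) f

lemma key_cs {M : ℕ} [NeZero M] (v w : ZMod M → ℝ) (c d : ZMod M) :
    |∑ i, v i * (w (i + c) - w (i + d))| ≤
      vecNorm v * vecNorm (fun i => w i - w (i - (c - d))) := by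
  have hre : ∑ i, (w (i + c) - w (i + d)) ^ 2
      = ∑ i, (w i - w (i - (c - d))) ^ 2 := by
    rw [← sum_reindex_sub (fun i => (w (i + c) - w (i + d)) ^ 2) c]
    refine Finset.sum_congr rfl fun i _ => ?_
    have h1 : i - c + c = i := by ring
    have h2 : i - c + d = i - (c - d) := by ring
    rw [h1, h2]
  have hcs := Finset.sum_mul_sq_le_sq_mul_sq Finset.univ v
    (fun i => w (i + c) - w (i + d))
  unfold vecNorm
  rw [← Real.sqrt_mul (by positivity), ← Real.sqrt_sq_eq_abs]
  exact Real.sqrt_le_sqrt (by rw [← hre]; exact hcs)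

/-- Bound on the change of the ORKA objective under refinement of the shift vector:
if `λ = 2λ' + λ''` with `λ'' ∈ {−1,0,1}^N`, then
`|⟨B, Gram(S_{−λ}D) − Gram(S_{−2λ'}D)⟩|
  ≤ Σ_{j,k} |B_{jk}| ‖D_{:,j}‖₂ ‖D_{:,k} − S_{λ''_k − λ''_j}(D_{:,k})‖₂`. -/
theorem refinement_error_bound {M N : ℕ} [NeZero M]
    (D : Matrix (ZMod M) (Fin N) ℝ) (lam lam' lam'' : Fin N → ℤ)
    (hdecomp : lam = fun k => 2 * lam' k + lam'' k)
    (hlam'' : ∀ k, lam'' k = -1 ∨ lam'' k = 0 ∨ lam'' k = 1)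
    (B : Matrix (Fin N) (Fin N) ℝ) :
    |∑ j, ∑ k, B j k *
        ((((colShift (fun k => -lam k) D)ᵀ * colShift (fun k => -lam k) D) j k) -
         (((colShift (fun k => -(2 * lam' k)) D)ᵀ *
            colShift (fun k => -(2 * lam' k)) D) j k))| ≤
      ∑ j, ∑ k, |B j k| * vecNorm (fun i => D i j) *
        vecNorm (fun i => D i k - shiftVec (lam'' k - lam'' j) (fun i' => D i' k) i) := by
  -- Gram entry computation
  have gram : ∀ (μ : Fin N → ℤ) (j k : Fin N),
      ((colShift (fun k => -μ k) D)ᵀ * colShift (fun k => -μ k) D) j k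
        = ∑ i, D i j * D (i + (((μ k : ZMod M)) - ((μ j : ZMod M)))) k := by
    intro μ j k
    rw [Matrix.mul_apply]
    simp only [Matrix.transpose_apply, colShift, Int.cast_neg, sub_neg_eq_add]
    rw [← sum_reindex_sub (fun i => D (i + (μ j : ZMod M)) j *
        D (i + (μ k : ZMod M)) k) ((μ j : ZMod M))]
    refine Finset.sum_congr rfl fun i _ => ?_
    have h1 : i - (μ j : ZMod M) + (μ j : ZMod M) = i := by ring
    have h2 : i - (μ j : ZMod M) + (μ k : ZMod M)
        = i + ((μ k : ZMod M) - (μ j : ZMod M)) := by ring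
    rw [h1, h2]
  calc |∑ j, ∑ k, B j k * _| ≤ ∑ j, |∑ k, B j k * _| := Finset.abs_sum_le_sum_abs _ _
    _ ≤ ∑ j, ∑ k, |B j k * _| :=
        Finset.sum_le_sum fun j _ => Finset.abs_sum_le_sum_abs _ _
    _ ≤ _ := by
        refine Finset.sum_le_sum fun j _ => Finset.sum_le_sum fun k _ => ?_
        rw [abs_mul, mul_assoc]
        refine mul_le_mul_of_nonneg_left ?_ (abs_nonneg _)
        set c : ZMod M := ((lam k : ZMod M)) - ((lam j : ZMod M)) with hc
        set d : ZMod M := (((2 * lam' k : ℤ) : ZMod M)) - (((2 * lam' j : ℤ) : ZMod M)) with hd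
        have hEntry : ((colShift (fun k => -lam k) D)ᵀ * colShift (fun k => -lam k) D) j k -
            ((colShift (fun k => -(2 * lam' k)) D)ᵀ *
              colShift (fun k => -(2 * lam' k)) D) j k
            = ∑ i, D i j * (D (i + c) k - D (i + d) k) := by
          rw [gram lam j k, gram (fun k => 2 * lam' k) j k, ← Finset.sum_sub_distrib]
          exact Finset.sum_congr rfl fun i _ => by rw [mul_sub]
        have hcd : c - d = ((lam'' k - lam'' j : ℤ) : ZMod M) := by
          subst hdecomp
          simp only [hc, hd]
          push_cast
          ring
        have := key_cs (fun i => D i j) (fun i => D i k) c d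
        rw [hEntry]
        refine this.trans (le_of_eq ?_)
        congr 1
        unfold vecNorm shiftVec
        congr 1
        refine Finset.sum_congr rfl fun i _ => ?_
        rw [hcd]
end
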